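/- For any positive integer j and any graph G, α_j(G) ≤ a_j′(G), i.e., the j-independence number is at most the maximum integer k for which the sum of the k smallest degrees minus k(j−1)/2 is at most m(G). -/

import Mathlib

open Finset

namespace DSI

variable {V : Type*} (G : SimpleGraph V) [Fintype V] [DecidableEq V] [DecidableRel G.Adj]

/-- The degree sequence of `G`, sorted in non-decreasing order. -/
def dseq : List ℕ := (Finset.univ.val.map (fun v => G.degree v)).sort (· ≤ ·)

/-- The sum of the `k` smallest degrees, `Σ_{i=1}^k d_i`. -/
def sumSmallest (k : ℕ) : ℕ := ((dseq G).take k).sum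

/-- The sum of the `k` largest degrees, `Σ_{i=1}^k d_{n-i+1}`. -/
def sumLargest (k : ℕ) : ℕ := ((dseq G).reverse.take k).sum

/-- The number of edges `m(G)`. -/
def esize : ℕ := G.edgeFinset.card

/-- `m[S]`: the number of edges of the subgraph induced by `S`. -/
def mOn (S : Finset V) : ℕ := (S.sym2.filter (fun e => e ∈ G.edgeSet)).card

/-- A set `I` is `j`-independent if every vertex of `I` has fewer than `j` neighbours in `I`,
i.e. the induced subgraph has maximum degree `< j`. -/
def JIndep (j : ℕ) (I : Finset V) : Prop := ∀ v ∈ I, (I.filter (G.Adj v)).card < j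

/-- The `j`-independence number `α_j(G)`. -/
noncomputable def alphaJ (j : ℕ) : ℕ := sSup {k | ∃ I : Finset V, JIndep G j I ∧ I.card = k}

/-- The family `F` of maximum `j`-independent sets. -/
noncomputable def maxJIndep (j : ℕ) : Set (Finset V) :=
  {S | JIndep G j S ∧ S.card = alphaJ G j}

/-- `max_{S ∈ F} (m[V−S] − m[S])`. -/
noncomputable def fU (j : ℕ) : ℤ :=
  sSup ((fun S : Finset V => (mOn G Sᶜ : ℤ) - (mOn G S : ℤ)) '' maxJIndep G j)

/-- `min_{S ∈ F} (m[V−S] − m[S])`. -/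
noncomputable def fL (j : ℕ) : ℤ :=
  sInf ((fun S : Finset V => (mOn G Sᶜ : ℤ) - (mOn G S : ℤ)) '' maxJIndep G j)

/-- The upper `j`-annihilation number `a_j(G)`. -/
noncomputable def aJ (j : ℕ) : ℕ :=
  sSup {k | k ≤ Fintype.card V ∧ (sumSmallest G k : ℤ) + fU G j ≤ (esize G : ℤ)}

/-- The lower `j`-annihilation number `c_j(G)`. -/
noncomputable def cJ (j : ℕ) : ℕ :=
  sInf {k | k ≤ Fintype.card V ∧ (esize G : ℤ) ≤ (sumLargest G k : ℤ) + fL G j}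

/-- The annihilation number `a(G)`. -/
noncomputable def annihilation : ℕ :=
  sSup {k | k ≤ Fintype.card V ∧ sumSmallest G k ≤ esize G}

/-- An independent set. -/
def IndepSet (I : Finset V) : Prop := ∀ v ∈ I, ∀ w ∈ I, ¬ G.Adj v w

/-- The independence number `α(G)`. -/
noncomputable def alpha : ℕ := sSup {k | ∃ I : Finset V, IndepSet G I ∧ I.card = k}

end DSI
/-- The weak upper `j`-annihilation number
`a_j′(G) = max { k | Σ_{i=1}^k d_i - k(j-1)/2 ≤ m(G) }`. -/
noncomputable def DSI.aJweak {V : Type*} (G : SimpleGraph V) [Fintype V]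
    [DecidableEq V] [DecidableRel G.Adj] (j : ℕ) : ℕ :=
  sSup {k | k ≤ Fintype.card V ∧
    (DSI.sumSmallest G k : ℚ) - (k : ℚ) * ((j : ℚ) - 1) / 2 ≤ (DSI.esize G : ℚ)}

private lemma dsi_take_sum_le_of_sublist : ∀ {l₁ l₂ : List ℕ}, l₁.Sublist l₂ → l₂.Pairwise (· ≤ ·) →
    (l₂.take l₁.length).sum ≤ l₁.sum := by
  intro l₁ l₂ h
  induction h with
  | slnil => simp
  | @cons l₁ l₂ a h ih =>
    intro hs
    rcases List.pairwise_cons.mp hs with ⟨ha, hs'⟩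
    cases l₁ with
    | nil => simp
    | cons b l₁' =>
      have hm : l₁'.length < l₂.length := h.length_le
      have key := ih hs'
      simp only [List.length_cons, List.sum_cons] at key
      have h2 : (List.take (l₁'.length + 1) l₂).sum
          = (List.take l₁'.length l₂).sum + l₂[l₁'.length] :=
        List.sum_take_succ _ _ hm
      have ha2 : a ≤ l₂[l₁'.length] := ha _ (List.getElem_mem _)
      simp only [List.length_cons, List.take_succ_cons, List.sum_cons]
      omega
  | @cons_cons l₁ l₂ a h ih =>
    intro hs
    rcases List.pairwise_cons.mp hs with ⟨ha, hs'⟩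
    have := ih hs'
    simp only [List.length_cons, List.take_succ_cons, List.sum_cons]
    omega

private lemma dsi_take_sum_le_of_le {t s : Multiset ℕ} (h : t ≤ s) :
    ((s.sort (· ≤ ·)).take (Multiset.card t)).sum ≤ t.sum := by
  have hsub : (t.sort (· ≤ ·)).Sublist (s.sort (· ≤ ·)) := by
    apply List.sublist_of_subperm_of_pairwise _ (Multiset.pairwise_sort _ _)
      (Multiset.pairwise_sort _ _)
    rw [← Multiset.coe_le, Multiset.sort_eq, Multiset.sort_eq]
    exact h
  have H := dsi_take_sum_le_of_sublist hsub (Multiset.pairwise_sort _ _)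
  have h1 : (t.sort (· ≤ ·)).length = Multiset.card t := Multiset.length_sort _
  have h2 : (t.sort (· ≤ ·)).sum = t.sum := by
    rw [← Multiset.sum_coe, Multiset.sort_eq]
  rwa [h1, h2] at H

private lemma dsi_degree_split {V : Type*} (G : SimpleGraph V) [Fintype V] [DecidableEq V]
    [DecidableRel G.Adj] (I : Finset V) (v : V) :
    G.degree v = (I.filter (G.Adj v)).card + (Iᶜ.filter (G.Adj v)).card := by
  have h : G.degree v = (Finset.univ.filter (G.Adj v)).card := by
    rw [← SimpleGraph.neighborFinset_eq_filter]; rfl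
  rw [h, ← Finset.union_compl I, Finset.filter_union, Finset.card_union_of_disjoint]
  exact Finset.disjoint_filter_filter disjoint_compl_right

theorem alphaJ_le_aJweak {V : Type*} (G : SimpleGraph V) [Fintype V]
    [DecidableEq V] [DecidableRel G.Adj] (j : ℕ) (hj : 1 ≤ j) :
    DSI.alphaJ G j ≤ DSI.aJweak G j := by
  classical
  -- the j-independence number is attained
  have hbdd : BddAbove {k | ∃ I : Finset V, DSI.JIndep G j I ∧ I.card = k} := by
    refine ⟨Fintype.card V, ?_⟩
    rintro k ⟨I, -, rfl⟩
    simpa using I.card_le_univ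
  have hne : {k | ∃ I : Finset V, DSI.JIndep G j I ∧ I.card = k}.Nonempty :=
    ⟨0, ∅, fun v hv => absurd hv (Finset.notMem_empty v), Finset.card_empty⟩
  obtain ⟨I, hI, hcard⟩ := Nat.sSup_mem hne hbdd
  set k := I.card with hk
  -- degree sums
  set A := ∑ v ∈ I, G.degree v with hA
  set B := ∑ v ∈ I, (I.filter (G.Adj v)).card with hB
  set C := ∑ v ∈ I, (Iᶜ.filter (G.Adj v)).card with hC
  set D := ∑ v ∈ Iᶜ, G.degree v with hD
  have hAeq : A = B + C := by
    rw [hA, hB, hC, ← Finset.sum_add_distrib]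
    exact Finset.sum_congr rfl fun v _ => dsi_degree_split G I v
  have hCeq : C = ∑ w ∈ Iᶜ, (I.filter (G.Adj w)).card := by
    rw [hC]
    simp only [Finset.card_filter]
    rw [Finset.sum_comm]
    exact Finset.sum_congr rfl fun w _ => Finset.sum_congr rfl fun v _ =>
      if_congr (G.adj_comm v w) rfl rfl
  have hCD : C ≤ D := by
    rw [hCeq, hD]
    refine Finset.sum_le_sum fun w _ => ?_
    have h : G.degree w = (Finset.univ.filter (G.Adj w)).card := by
      rw [← SimpleGraph.neighborFinset_eq_filter]; rfl
    rw [h]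
    exact Finset.card_le_card (Finset.filter_subset_filter _ (Finset.subset_univ I))
  have h2m : A + D = 2 * DSI.esize G := by
    rw [hA, hD, add_comm, Finset.sum_compl_add_sum,
      SimpleGraph.sum_degrees_eq_twice_card_edges]
    rfl
  have hBk : B ≤ k * (j - 1) := by
    calc B ≤ I.card • (j - 1) :=
      Finset.sum_le_card_nsmul _ _ _ fun v hv => by have := hI v hv; omega
    _ = k * (j - 1) := by rw [smul_eq_mul]
  have hSS : DSI.sumSmallest G k ≤ A := by
    have ht : (I.val.map (fun v => G.degree v)) ≤ (Finset.univ.val.map (fun v => G.degree v)) :=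
      Multiset.map_le_map (Finset.val_le_iff.mpr (Finset.subset_univ I))
    have H := dsi_take_sum_le_of_le ht
    rw [Multiset.card_map] at H
    have hc : Multiset.card I.val = k := rfl
    rw [hc] at H
    have hsum : (I.val.map (fun v => G.degree v)).sum = A := rfl
    rw [hsum] at H
    exact H
  -- combine in ℕ
  have hnat : 2 * DSI.sumSmallest G k ≤ k * (j - 1) + 2 * DSI.esize G := by omega
  -- membership in the aJweak defining set
  have hmem : k ∈ {k | k ≤ Fintype.card V ∧
      (DSI.sumSmallest G k : ℚ) - (k : ℚ) * ((j : ℚ) - 1) / 2 ≤ (DSI.esize G : ℚ)} := by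
    constructor
    · simpa using I.card_le_univ
    · have hq : ((2 * DSI.sumSmallest G k : ℕ) : ℚ) ≤ ((k * (j - 1) + 2 * DSI.esize G : ℕ) : ℚ) := by
        exact_mod_cast hnat
      push_cast [Nat.cast_sub hj] at hq
      linarith
  calc DSI.alphaJ G j = k := hcard.symm
  _ ≤ DSI.aJweak G j := le_csSup ⟨Fintype.card V, fun n hn => hn.1⟩ hmem
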